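/- arXiv:1609.03134 — 2 statements merged into one kernel-verified Lean document; each statement's English description precedes it below -/
import Mathlib

section
/- Let p be an odd prime, r ≥ 1, K = ℚ(ζ_{p^r} + ζ_{p^r}^{-1}), and P the unique prime ideal of 𝒪_K above p. Then P is the principal ideal generated by 2 − 2cos(2π/p^r) = (1 − ζ_{p^r})(1 − ζ_{p^r}^{-1}), and this generator is totally positive in K. -/
open Polynomial NumberField


set_option maxHeartbeats 1000000 in
private lemma aux_pos {L : Type*} [Field L] [Algebra ℚ L] [FiniteDimensional ℚ L]
    (K : IntermediateField ℚ L) (n : ℕ) (hn : 1 < n) (ζ : L) (hζ : IsPrimitiveRoot ζ n)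
    (x : K) (hx : (x : L) = (1 - ζ) * (1 - ζ⁻¹)) (σ : K →+* ℝ) : 0 < σ x := by
  letI : Algebra K ℂ := (Complex.ofRealHom.comp σ).toAlgebra
  haveI : FiniteDimensional K L := FiniteDimensional.right ℚ K L
  haveI : Algebra.IsAlgebraic (K : Type _) L := Algebra.IsAlgebraic.of_finite K L
  haveI : Module.IsTorsionFree (K : Type _) ℂ :=
    Module.isTorsionFree_iff_algebraMap_injective.mpr (algebraMap K ℂ).injective
  haveI : Module.IsTorsionFree (K : Type _) L :=
    Module.isTorsionFree_iff_algebraMap_injective.mpr (algebraMap K L).injective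
  let τ' : L →ₐ[K] ℂ := IsAlgClosed.lift
  have hτ'K : ∀ z : K, τ' ((z : L)) = (σ z : ℂ) := by
    intro z
    have h0 : ((z : L)) = algebraMap K L z := rfl
    rw [h0, AlgHom.commutes]
    rfl
  set w := τ' ζ with hwdef
  have hwprim : IsPrimitiveRoot w n := hζ.map_of_injective τ'.toRingHom.injective
  have hw1 : w ≠ 1 := hwprim.ne_one hn
  have hwnorm : ‖w‖ = 1 :=
    Complex.norm_eq_one_of_pow_eq_one (by rw [← map_pow, hζ.pow_eq_one, map_one]) (by omega)
  have hwconj : (starRingEnd ℂ) w = w⁻¹ := by rw [Complex.inv_eq_conj hwnorm]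
  have hcalc : (σ x : ℂ) = Complex.normSq (1 - w) := by
    rw [← hτ'K x, hx, map_mul, map_sub, map_sub, map_one, map_inv₀, ← hwdef, ← hwconj]
    rw [Complex.normSq_eq_conj_mul_self, map_sub, map_one]
    ring
  have hnsq : 0 < Complex.normSq (1 - w) := by
    rw [Complex.normSq_pos, sub_ne_zero]
    exact fun h => hw1 h.symm
  have hre : σ x = Complex.normSq (1 - w) := by exact_mod_cast hcalc
  rw [hre]
  exact hnsq

/-- With `K = ℚ(ζ_{p^r} + ζ_{p^r}⁻¹)` and `P` the unique prime of `𝓞 K` above the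
odd prime `p`, `P` is generated by `2 − 2cos(2π/p^r) = (1 − ζ_{p^r})(1 − ζ_{p^r}⁻¹)`, and this
generator is totally positive in `K`. -/
theorem stmt_6 (p r : ℕ) (hp : p.Prime) (hpodd : Odd p) (hr : 1 ≤ r)
    (q : ℕ+) (hq : (q : ℕ) = p ^ r)
    (L : Type*) [Field L] [NumberField L] [IsCyclotomicExtension {(q : ℕ)} ℚ L]
    (ζ : L) (hζ : IsPrimitiveRoot ζ (p ^ r))
    (K : IntermediateField ℚ L) (hK : K = IntermediateField.adjoin ℚ {ζ + ζ⁻¹})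
    (P : Ideal (NumberField.RingOfIntegers K)) (hP : P.IsPrime) (hP0 : P ≠ ⊥)
    (hPp : (p : NumberField.RingOfIntegers K) ∈ P) :
    ∃ y : NumberField.RingOfIntegers K,
      ((y : K) : L) = (1 - ζ) * (1 - ζ⁻¹) ∧
      P = Ideal.span {y} ∧
      ∀ σ : K →+* ℝ, 0 < σ (y : K) := by
  -- numerology
  have hpne2 : p ≠ 2 := by rintro rfl; exact absurd hpodd (by decide)
  have hp3 : 3 ≤ p := by have := hp.two_le; omega
  have hn3 : 3 ≤ p ^ r := le_trans hp3 (Nat.le_self_pow (by omega) p)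
  have hn0 : p ^ r ≠ 0 := by omega
  have hζ0 : ζ ≠ 0 := hζ.ne_zero hn0
  have hζ1 : ζ ≠ 1 := hζ.ne_one (by omega)
  -- ℕ+ bookkeeping
  obtain ⟨k, rfl⟩ : ∃ k, r = k + 1 := ⟨r - 1, by omega⟩
  let pp : ℕ+ := ⟨p, hp.pos⟩
  have hppc : (pp : ℕ) = p := rfl
  have hqpp : q = pp ^ (k + 1) := by
    apply PNat.coe_injective
    rw [hq, PNat.pow_coe, hppc]
  have hppne2 : pp ≠ 2 := by
    intro h; exact hpne2 (by rw [← hppc, h]; rfl)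
  haveI : Fact (Nat.Prime (pp : ℕ)) := ⟨hp⟩
  haveI : Fact (Nat.Prime p) := ⟨hp⟩
  haveI hcyc : IsCyclotomicExtension {p ^ (k + 1)} ℚ L := by rw [← hq]; infer_instance
  have hζpp : IsPrimitiveRoot ζ ((pp ^ (k + 1) : ℕ+) : ℕ) := by
    rw [PNat.pow_coe, hppc]; exact hζ
  have hirr : Irreducible (cyclotomic ((pp ^ (k + 1) : ℕ+) : ℕ) ℚ) :=
    cyclotomic.irreducible_rat (pp ^ (k + 1)).pos
  -- norms of ζ - 1 and ζ⁻¹ - 1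
  have hnorm1 : Algebra.norm ℚ (ζ - 1) = (p : ℚ) := by
    have := hζ.norm_sub_one_of_prime_ne_two (cyclotomic.irreducible_rat (by positivity)) hpne2
    simpa using this
  have hnorm2 : Algebra.norm ℚ (ζ⁻¹ - 1) = (p : ℚ) := by
    have := hζ.inv.norm_sub_one_of_prime_ne_two (cyclotomic.irreducible_rat (by positivity)) hpne2
    simpa using this
  -- the element y
  have hgen : ζ + ζ⁻¹ ∈ K := by
    rw [hK]; exact IntermediateField.mem_adjoin_simple_self ℚ _
  set yK : K := 2 - ⟨ζ + ζ⁻¹, hgen⟩ with hyKdef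
  have hyKL : (yK : L) = 2 - (ζ + ζ⁻¹) := by
    rw [hyKdef]
    push_cast
    norm_num
    exact map_ofNat (algebraMap K L) 2
  have hyK : (yK : L) = (1 - ζ) * (1 - ζ⁻¹) := by
    have hmul : ζ * ζ⁻¹ = 1 := mul_inv_cancel₀ hζ0
    rw [hyKL]
    linear_combination -hmul
  have hyint : IsIntegral ℤ yK := by
    have h1 : IsIntegral ℤ ((yK : L)) := by
      rw [hyK]
      exact (isIntegral_one.sub (hζ.isIntegral (by omega))).mul
        (isIntegral_one.sub (hζ.inv.isIntegral (by omega)))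
    have : (yK : L) = algebraMap K L yK := rfl
    rw [this] at h1
    exact (isIntegral_algebraMap_iff (algebraMap K L).injective).mp h1
  set y : 𝓞 K := ⟨yK, hyint⟩ with hydef
  haveI : NumberField K := { to_charZero := inferInstance, to_finiteDimensional := inferInstance }
  -- real embedding business
  haveI : Algebra.IsAlgebraic ℚ L := Algebra.IsAlgebraic.of_finite ℚ L
  let τ : L →ₐ[ℚ] ℂ := IsAlgClosed.lift
  set z := τ ζ with hzdef
  have hτinj : Function.Injective τ := τ.toRingHom.injective
  have hzprim : IsPrimitiveRoot z (p ^ (k + 1)) := hζ.map_of_injective hτinj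
  have hznorm : ‖z‖ = 1 :=
    Complex.norm_eq_one_of_pow_eq_one (by rw [← map_pow, hζ.pow_eq_one, map_one]) hn0
  have hconj : (starRingEnd ℂ) z = z⁻¹ := by
    rw [Complex.inv_eq_conj hznorm]
  have hz0 : z ≠ 0 := hzprim.ne_zero hn0
  have hzne : (starRingEnd ℂ) z ≠ z := by
    rw [hconj]
    intro h
    have hz2 : z ^ 2 = 1 := by
      rw [pow_two]
      nth_rewrite 1 [← h]
      rw [inv_mul_cancel₀ hz0]
    have hdd := hzprim.dvd_of_pow_eq_one 2 hz2
    have := Nat.le_of_dvd (by norm_num) hdd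
    omega
  have hτinv : τ ζ⁻¹ = z⁻¹ := by rw [map_inv₀]
  have key : ∀ x : L, x ∈ K → (starRingEnd ℂ) (τ x) = τ x := by
    rw [hK]
    intro x hx
    induction hx using IntermediateField.adjoin_induction with
    | mem x hx =>
      rcases Set.mem_singleton_iff.mp hx with rfl
      simp only [map_add, hτinv, ← hzdef, map_inv₀, hconj, inv_inv]
      ring
    | algebraMap x => simp
    | add x y _ _ hx hy => simp [map_add, hx, hy]
    | inv x _ hx => simp [map_inv₀, hx]
    | mul x y _ _ hx hy => simp [map_mul, hx, hy]
  have hζK : ∀ x : K, (x : L) ≠ ζ := by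
    intro x h
    apply hzne
    have := key ζ (h ▸ x.2)
    simpa [hzdef] using this
  -- degree ≥ 2
  have hd2 : 2 ≤ Module.finrank K L := by
    have hpos : 0 < Module.finrank K L := Module.finrank_pos
    rcases Nat.lt_or_ge (Module.finrank K L) 2 with h | h
    · exfalso
      have h1 : Module.finrank K L = 1 := by omega
      have hbt : (⊥ : Subalgebra K L) = ⊤ := Subalgebra.bot_eq_top_iff_finrank_eq_one.mpr h1
      have hmem : ζ ∈ (⊥ : Subalgebra K L) := by rw [hbt]; trivial
      obtain ⟨x, hx⟩ := Algebra.mem_bot.mp hmem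
      exact hζK x hx
    · exact h
  -- norm computation
  have htower : Algebra.norm ℚ ((yK : L)) = (Algebra.norm ℚ yK) ^ (Module.finrank K L) := by
    rw [← Algebra.norm_norm (R := ℚ) (S := K) (a := (yK : L)),
      show ((yK : L)) = algebraMap K L yK from rfl, Algebra.norm_algebraMap, map_pow]
  have hnormy : (Algebra.norm ℚ yK) ^ (Module.finrank K L) = (p : ℚ) ^ 2 := by
    rw [← htower, hyK, show (1 - ζ) * (1 - ζ⁻¹) = (ζ - 1) * (ζ⁻¹ - 1) by ring, map_mul,
      hnorm1, hnorm2]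
    ring
  have hmq : ((Algebra.norm ℤ y : ℤ) : ℚ) = Algebra.norm ℚ yK := Algebra.coe_norm_int y
  have hmd : (Algebra.norm ℤ y) ^ (Module.finrank K L) = (p : ℤ) ^ 2 := by
    have : (((Algebra.norm ℤ y) ^ (Module.finrank K L) : ℤ) : ℚ) = (((p : ℤ) ^ 2 : ℤ) : ℚ) := by
      push_cast [hmq]
      exact hnormy
    exact_mod_cast this
  have hma : (Algebra.norm ℤ y).natAbs ^ (Module.finrank K L) = p ^ 2 := by
    have := congrArg Int.natAbs hmd
    simpa [Int.natAbs_pow] using this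
  have hap : (Algebra.norm ℤ y).natAbs = p := by
    have hdvd : (Algebra.norm ℤ y).natAbs ∣ p := by
      have h2 : (Algebra.norm ℤ y).natAbs ^ 2 ∣ p ^ 2 := by
        rw [← hma]; exact pow_dvd_pow _ hd2
      exact (Nat.pow_dvd_pow_iff two_ne_zero).mp h2
    rcases (hp.eq_one_or_self_of_dvd _ hdvd) with h1 | h
    · exfalso; rw [h1, one_pow] at hma; nlinarith
    · exact h
  have habs : Ideal.absNorm (Ideal.span {y}) = p := by
    rw [Ideal.absNorm_span_singleton]; exact hap
  have hy0 : y ≠ 0 := by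
    intro h
    rw [h] at hap
    simp at hap
    omega
  have hyprime : Prime y :=
    Ideal.prime_of_irreducible_absNorm_span hy0 (by rw [habs]; exact hp.prime.irreducible)
  have hspanP : (Ideal.span {y}).IsPrime := (Ideal.span_singleton_prime hy0).mpr hyprime
  have hpspan : (p : 𝓞 K) ∈ Ideal.span {y} := by
    have := Ideal.absNorm_mem (Ideal.span {y})
    rwa [habs] at this
  -- the prime π = ζ - 1 of 𝓞 L
  set π : 𝓞 L := hζpp.toInteger - 1 with hπdef
  haveI : NeZero (p ^ (k + 1)) := ⟨hn0⟩
  have hπ : Prime π := hζ.zeta_sub_one_prime_of_ne_two hpne2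
  have hO : IsPrimitiveRoot (hζpp.toInteger : 𝓞 L) (p ^ (k + 1)) := by
    have := hζpp.toInteger_isPrimitiveRoot
    exact this
  have hpdvd : (p : 𝓞 L) ∣ π ^ (primitiveRoots (p ^ (k + 1)) (𝓞 L)).card := by
    haveI : Fact (Nat.Prime p) := ⟨hp⟩
    have hcy : ((p : ℕ) : 𝓞 L) = ∏ μ ∈ primitiveRoots (p ^ (k + 1)) (𝓞 L), (1 - μ) :=
      calc ((p : ℕ) : 𝓞 L) = Polynomial.eval 1 (cyclotomic (p ^ (k + 1)) (𝓞 L)) :=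
            (eval_one_cyclotomic_prime_pow k).symm
        _ = _ := by
            rw [cyclotomic_eq_prod_X_sub_primitiveRoots hO, eval_prod]
            simp
    rw [show ((p : 𝓞 L)) = ((p : ℕ) : 𝓞 L) by push_cast; ring, hcy]
    refine dvd_trans (Finset.prod_dvd_prod_of_dvd _ _ ?_) (by rw [Finset.prod_const])
    intro μ hμ
    have hμprim : IsPrimitiveRoot μ (p ^ (k + 1)) :=
      (mem_primitiveRoots (Nat.pos_of_ne_zero hn0)).mp hμ
    haveI : NeZero (p ^ (k + 1)) := ⟨hn0⟩
    obtain ⟨i, -, hi⟩ := hμprim.eq_pow_of_pow_eq_one hO.pow_eq_one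
    have hdvd1 : (μ - 1) ∣ (hζpp.toInteger - 1) := by
      have := sub_dvd_pow_sub_pow μ 1 i
      rw [one_pow, hi] at this
      exact this
    rw [hπdef]
    have h2 := (neg_dvd (α := 𝓞 L)).mpr hdvd1
    rw [neg_sub] at h2
    exact h2
  -- every prime of 𝓞 L containing p is span {π}
  have huniq : ∀ Q : Ideal (𝓞 L), Q.IsPrime → (p : 𝓞 L) ∈ Q → Q = Ideal.span {π} := by
    intro Q hQ hpQ
    have hπQ : π ∈ Q := by
      obtain ⟨c, hc⟩ := hpdvd
      exact hQ.mem_of_pow_mem _ (hc ▸ Ideal.mul_mem_right _ _ hpQ)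
    have hspanπ : (Ideal.span {π}).IsPrime := (Ideal.span_singleton_prime hπ.ne_zero).mpr hπ
    have hmax : (Ideal.span {π}).IsMaximal :=
      Ideal.IsPrime.isMaximal hspanπ (by
        rw [Ne, Ideal.span_singleton_eq_bot]
        exact hπ.ne_zero)
    exact (hmax.eq_of_le hQ.ne_top ((Ideal.span_singleton_le_iff_mem _).mpr hπQ)).symm
  -- injectivity of 𝓞 K → 𝓞 L
  have hinj : Function.Injective (algebraMap (𝓞 K) (𝓞 L)) := by
    intro a b hab
    have h1 : ((algebraMap (𝓞 K) (𝓞 L) a : 𝓞 L) : L) = ((algebraMap (𝓞 K) (𝓞 L) b : 𝓞 L) : L) := by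
      rw [hab]
    have h2 : algebraMap K L (a : K) = algebraMap K L (b : K) := h1
    have h3 : (a : K) = (b : K) := (algebraMap K L).injective h2
    exact RingOfIntegers.ext h3
  -- both P and span{y} are the contraction of span{π}
  have hcomap : ∀ (P₀ : Ideal (𝓞 K)), P₀.IsPrime → (p : 𝓞 K) ∈ P₀ →
      P₀ = (Ideal.span {π}).comap (algebraMap (𝓞 K) (𝓞 L)) := by
    intro P₀ hP₀ hp₀
    obtain ⟨Q, hQp, hQc⟩ :=
      Ideal.exists_ideal_over_prime_of_isIntegral_of_isDomain (S := 𝓞 L) P₀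
        (by rw [(RingHom.injective_iff_ker_eq_bot _).mp hinj]; exact bot_le)
    have hpQ : (p : 𝓞 L) ∈ Q := by
      have h1 : algebraMap (𝓞 K) (𝓞 L) (p : 𝓞 K) ∈ Q := by
        rw [← hQc] at hp₀
        exact hp₀
      rwa [map_natCast] at h1
    rw [← hQc, huniq Q hQp hpQ]
  have hPy : P = Ideal.span {y} := by
    rw [hcomap P hP hPp, ← hcomap (Ideal.span {y}) hspanP hpspan]
  have hpos : ∀ σ : K →+* ℝ, 0 < σ (y : K) :=
    fun σ => aux_pos K (p ^ (k + 1)) (by omega) ζ hζ (y : K) hyK σ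
  exact ⟨y, hyK, hPy, hpos⟩
end

section
/- Let p be an odd prime, r ≥ 1, and K = ℚ(ζ_{p^r} + ζ_{p^r}^{-1}). Then √p ∈ K if and only if p ≡ 1 (mod 4). -/
open Polynomial

lemma aux_cheb {F : Type*} [Field F] [CharZero F] (ζ : F) (hζ : ζ ≠ 0) :
    ∀ n : ℕ, ζ ^ n + ζ⁻¹ ^ n ∈ IntermediateField.adjoin ℚ {ζ + ζ⁻¹} := by
  have hu : ζ * ζ⁻¹ = 1 := mul_inv_cancel₀ hζ
  intro n
  induction n using Nat.twoStepInduction with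
  | zero => simpa using add_mem (one_mem _) (one_mem _)
  | one => simpa using IntermediateField.subset_adjoin ℚ {ζ + ζ⁻¹} rfl
  | more n ih1 ih2 =>
    have key : ζ ^ (n + 2) + ζ⁻¹ ^ (n + 2)
        = (ζ + ζ⁻¹) * (ζ ^ (n + 1) + ζ⁻¹ ^ (n + 1)) - (ζ * ζ⁻¹) * (ζ ^ n + ζ⁻¹ ^ n) := by
      ring
    rw [key, hu, one_mul]
    exact sub_mem (mul_mem (IntermediateField.subset_adjoin ℚ _ rfl) ih2) ih1

/-- For `p` an odd prime, `r ≥ 1`, and `K = ℚ(ζ_{p^r} + ζ_{p^r}⁻¹)`,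
`√p ∈ K` if and only if `p ≡ 1 (mod 4)`. -/
theorem stmt_7 (p r : ℕ) (hp : p.Prime) (hpodd : Odd p) (hr : 1 ≤ r)
    (q : ℕ+) (hq : (q : ℕ) = p ^ r)
    (L : Type*) [Field L] [NumberField L] [IsCyclotomicExtension {(q : ℕ)} ℚ L]
    (ζ : L) (hζ : IsPrimitiveRoot ζ (p ^ r))
    (K : IntermediateField ℚ L) (hK : K = IntermediateField.adjoin ℚ {ζ + ζ⁻¹}) :
    (∃ x : K, x ^ 2 = (p : K)) ↔ p % 4 = 1 := by
  subst hK
  haveI : Fact p.Prime := ⟨hp⟩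
  haveI : NeZero p := ⟨hp.pos.ne'⟩
  have hp2 : p ≠ 2 := by
    rintro rfl; exact (Nat.not_odd_iff_even.mpr even_two) hpodd
  have hpmod2 : p % 2 = 1 := Nat.odd_iff.mp hpodd
  have hpr_pos : 0 < p ^ r := pow_pos hp.pos r
  have hζ0 : ζ ≠ 0 := hζ.ne_zero hpr_pos.ne'
  have hfac : p ^ r = p ^ (r - 1) * p := by
    conv_lhs => rw [← Nat.sub_add_cancel hr]
    rw [pow_succ]
  set ζp := ζ ^ (p ^ (r - 1)) with hζp_def
  have hζp : IsPrimitiveRoot ζp p := hζ.pow hpr_pos hfac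
  have hζpp : ζp ^ p = 1 := hζp.pow_eq_one
  set ψ := AddChar.zmodChar p hζpp with hψdef
  have hψ : ψ.IsPrimitive := by
    have := AddChar.zmodChar_primitive_of_primitive_root p hζp
    exact this
  set χ := (quadraticChar (ZMod p)).ringHomComp (Int.castRingHom L) with hχdef
  have hchar : ringChar (ZMod p) ≠ 2 := by
    rw [ZMod.ringChar_zmod_n]; exact hp2
  have hχ1 : χ ≠ 1 :=
    (MulChar.ringHomComp_ne_one_iff (RingHom.injective_int _)).mpr (quadraticChar_ne_one hchar)
  have hχq : χ.IsQuadratic := (quadraticChar_isQuadratic (ZMod p)).comp _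
  have hg2 : gaussSum χ ψ ^ 2 = χ (-1) * (p : L) := by
    rw [gaussSum_sq hχ1 hχq hψ, ZMod.card]
  have hχneg : χ (-1) = ((ZMod.χ₄ (p : ZMod 4) : ℤ) : L) := by
    rw [hχdef, MulChar.ringHomComp_apply, quadraticChar_neg_one hchar, ZMod.card]
    rfl
  constructor
  · rintro ⟨x, hx⟩
    by_contra h1
    have h3 : p % 4 = 3 := by omega
    -- Gauss sum squares to -p
    have hneg : χ (-1) = -1 := by
      rw [hχneg, ZMod.χ₄_nat_three_mod_four h3]; norm_num
    have hgsq : gaussSum χ ψ ^ 2 = -(p : L) := by rw [hg2, hneg]; ring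
    -- coerce x to L
    have hy : ((x : L)) ^ 2 = (p : L) := by
      have := congrArg (fun t : IntermediateField.adjoin ℚ {ζ + ζ⁻¹} => (t : L)) hx
      push_cast at this
      exact this
    have hpL : (p : L) ≠ 0 := Nat.cast_ne_zero.mpr hp.pos.ne'
    have hy0 : (x : L) ≠ 0 := by
      intro h; apply hpL; rw [← hy, h]; ring
    set z := gaussSum χ ψ * (x : L)⁻¹ with hzdef
    have hz2 : z ^ 2 = -1 := by
      rw [hzdef, mul_pow, inv_pow, hy, hgsq]
      field_simp
    have hz4 : z ^ (2 ^ 2) = 1 := by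
      norm_num
      rw [show (4 : ℕ) = 2 * 2 by norm_num, pow_mul, hz2]; ring
    have hzne : z ^ (2 ^ 1) ≠ 1 := by
      rw [pow_one, hz2]; intro h
      have : (2 : L) = 0 := by linear_combination -h
      exact two_ne_zero this
    haveI : Fact (Nat.Prime 2) := ⟨Nat.prime_two⟩
    have hordz : orderOf z = 4 := by
      have := orderOf_eq_prime_pow hzne hz4
      simpa using this
    have hordζ : orderOf ζ = p ^ r := hζ.eq_orderOf.symm
    have hco2 : Nat.Coprime 2 p := (Nat.prime_two.coprime_iff_not_dvd).mpr (by omega)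
    have hco : Nat.Coprime 4 (p ^ r) := by
      have h := Nat.Coprime.pow 2 r hco2
      norm_num at h
      exact h
    have hordt : orderOf (z * ζ) = 4 * p ^ r := by
      rw [(Commute.all z ζ).orderOf_mul_eq_mul_orderOf_of_coprime (by rw [hordz, hordζ]; exact hco),
        hordz, hordζ]
    have ht : IsPrimitiveRoot (z * ζ) (4 * p ^ r) := by
      have := IsPrimitiveRoot.orderOf (z * ζ)
      rwa [hordt] at this
    have hint : IsIntegral ℚ (z * ζ) := IsIntegral.of_finite ℚ _
    have hmin : minpoly ℚ (z * ζ) = cyclotomic (4 * p ^ r) ℚ :=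
      (cyclotomic_eq_minpoly_rat ht (by positivity)).symm
    have hdvd := minpoly.degree_dvd hint
    rw [hmin, natDegree_cyclotomic] at hdvd
    have hrank : Module.finrank ℚ L = ((q : ℕ)).totient :=
      IsCyclotomicExtension.finrank L (Polynomial.cyclotomic.irreducible_rat q.pos)
    rw [hrank, hq] at hdvd
    rw [Nat.totient_mul hco, show Nat.totient 4 = 2 from by decide] at hdvd
    have hpos : 0 < (p ^ r).totient := Nat.totient_pos.mpr hpr_pos
    have := Nat.le_of_dvd hpos hdvd
    omega
  · intro h1
    have hneg : χ (-1) = 1 := by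
      rw [hχneg, ZMod.χ₄_nat_one_mod_four h1]; norm_num
    -- membership of the Gauss sum
    have hmem : ∀ a : ZMod p, ψ a + ψ (-a) ∈ IntermediateField.adjoin ℚ {ζ + ζ⁻¹} := by
      intro a
      have h1' : ψ a = ζ ^ (p ^ (r - 1) * a.val) := by
        rw [hψdef, AddChar.zmodChar_apply, hζp_def, ← pow_mul]
      have hmul : ψ a * ψ (-a) = 1 := by
        rw [← AddChar.map_add_eq_mul, add_neg_cancel, AddChar.map_zero_eq_one]
      have h2' : ψ (-a) = ζ⁻¹ ^ (p ^ (r - 1) * a.val) := by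
        rw [inv_pow, ← h1']
        exact eq_inv_of_mul_eq_one_left (by rw [mul_comm]; exact hmul)
      rw [h1', h2']
      exact aux_cheb ζ hζ0 _
    have hre : gaussSum χ ψ = ∑ a : ZMod p, χ a * ψ (-a) := by
      rw [gaussSum]
      refine Fintype.sum_equiv (Equiv.neg (ZMod p)) _ _ fun a => ?_
      rw [Equiv.neg_apply, neg_neg, show (-a : ZMod p) = -1 * a by ring, map_mul, hneg, one_mul]
    have h2g : (2 : L) * gaussSum χ ψ = ∑ a : ZMod p, χ a * (ψ a + ψ (-a)) := by
      rw [two_mul]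
      nth_rewrite 2 [hre]
      rw [gaussSum, ← Finset.sum_add_distrib]
      exact Finset.sum_congr rfl fun a _ => by ring
    have hgmem : gaussSum χ ψ ∈ IntermediateField.adjoin ℚ {ζ + ζ⁻¹} := by
      have h2K : (2 : L) ∈ IntermediateField.adjoin ℚ {ζ + ζ⁻¹} := by
        exact_mod_cast natCast_mem (IntermediateField.adjoin ℚ {ζ + ζ⁻¹}) 2
      have hsum : (2 : L) * gaussSum χ ψ ∈ IntermediateField.adjoin ℚ {ζ + ζ⁻¹} := by
        rw [h2g]
        refine sum_mem fun a _ => mul_mem ?_ (hmem a)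
        rw [hχdef, MulChar.ringHomComp_apply]
        exact intCast_mem _ _
      have : gaussSum χ ψ = (2 : L)⁻¹ * ((2 : L) * gaussSum χ ψ) := by
        rw [inv_mul_cancel_left₀ two_ne_zero]
      rw [this]
      exact mul_mem (inv_mem h2K) hsum
    refine ⟨⟨gaussSum χ ψ, hgmem⟩, Subtype.ext ?_⟩
    push_cast
    rw [hg2, hneg, one_mul]
end
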